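/- Let Ω, Λ ⊆ ℝ^d be bounded measurable sets of unit volume, c(x,y) = −x·y, p > 1 with Hölder conjugate q. Then p·1_W minimizes c[h] = ∫ c·h over Γ(1_Ω,1_Λ)^{p·1_{Ω×Λ}} if and only if q·1_{R(W̃)} minimizes c[h] over Γ(1_Ω, 1_{−Λ})^{q·1_{Ω×(−Λ)}}, where W̃ = (Ω×Λ)\W and R(x,y) = (x,−y). -/

import Mathlib

open MeasureTheory

/-- Membership in `Γ(f,g)^{h̄}`. -/
def memGamma (d : ℕ) (f g : (Fin d → ℝ) → ℝ)
    (hbar h : (Fin d → ℝ) × (Fin d → ℝ) → ℝ) : Prop :=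
  Integrable h ∧ (∀ᵐ z, 0 ≤ h z) ∧ (∀ᵐ z, h z ≤ hbar z) ∧
    (∀ᵐ x, ∫ y, h (x, y) = f x) ∧ (∀ᵐ y, ∫ x, h (x, y) = g y)

namespace Stmt19
variable {d : ℕ}
noncomputable abbrev ind {α : Type*} (S : Set α) : α → ℝ := Set.indicator S (fun _ => 1)

noncomputable def Req (d : ℕ) : ((Fin d → ℝ) × (Fin d → ℝ)) ≃ᵐ ((Fin d → ℝ) × (Fin d → ℝ)) :=
  (MeasurableEquiv.refl (Fin d → ℝ)).prodCongr (MeasurableEquiv.neg (Fin d → ℝ))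

lemma Req_mp : MeasurePreserving (Req d) volume volume := by
  rw [Measure.volume_eq_prod]
  exact (MeasurePreserving.id volume).prod (Measure.measurePreserving_neg volume)

lemma ae_R {P : ((Fin d → ℝ) × (Fin d → ℝ)) → Prop} (h : ∀ᵐ z, P z) :
    ∀ᵐ z : (Fin d → ℝ) × (Fin d → ℝ), P (z.1, -z.2) :=
  Req_mp.quasiMeasurePreserving.tendsto_ae.eventually h

lemma ae_neg {P : (Fin d → ℝ) → Prop} (h : ∀ᵐ y, P y) :
    ∀ᵐ y : Fin d → ℝ, P (-y) :=
  (Measure.measurePreserving_neg (volume : Measure (Fin d → ℝ))).quasiMeasurePreserving.tendsto_ae.eventually h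

lemma integrable_comp_R {f : ((Fin d → ℝ) × (Fin d → ℝ)) → ℝ} (hf : Integrable f) :
    Integrable (fun z : (Fin d → ℝ) × (Fin d → ℝ) => f (z.1, -z.2)) :=
  (Req_mp.integrable_comp_emb (Req d).measurableEmbedding).mpr hf

lemma integral_comp_R (f : ((Fin d → ℝ) × (Fin d → ℝ)) → ℝ) :
    ∫ z : (Fin d → ℝ) × (Fin d → ℝ), f (z.1, -z.2) = ∫ z, f z :=
  Req_mp.integral_comp (Req d).measurableEmbedding f

lemma integrable_comp_neg {f : (Fin d → ℝ) → ℝ} (hf : Integrable f) :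
    Integrable (fun y : Fin d → ℝ => f (-y)) :=
  ((Measure.measurePreserving_neg (volume : Measure (Fin d → ℝ))).integrable_comp_emb
    (MeasurableEquiv.neg (Fin d → ℝ)).measurableEmbedding).mpr hf

lemma R_image (S : Set ((Fin d → ℝ) × (Fin d → ℝ))) :
    (fun w : (Fin d → ℝ) × (Fin d → ℝ) => (w.1, -w.2)) '' S
      = (fun w : (Fin d → ℝ) × (Fin d → ℝ) => (w.1, -w.2)) ⁻¹' S := by
  ext z
  constructor
  · rintro ⟨w, hw, rfl⟩; simpa using hw
  · intro hz; exact ⟨(z.1, -z.2), hz, by simp⟩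

lemma negneg (B : Set (Fin d → ℝ)) : Neg.neg '' (Neg.neg '' B) = B := by
  simp [Set.image_image]

lemma mem_neg_image {B : Set (Fin d → ℝ)} {y : Fin d → ℝ} : y ∈ Neg.neg '' B ↔ -y ∈ B := by
  constructor
  · rintro ⟨w, hw, rfl⟩; simpa using hw
  · intro h; exact ⟨-y, h, by simp⟩

lemma ind_R (A B : Set (Fin d → ℝ)) (z : (Fin d → ℝ) × (Fin d → ℝ)) :
    ind (A ×ˢ B) (z.1, -z.2) = ind (A ×ˢ (Neg.neg '' B)) z := by
  by_cases h : z ∈ A ×ˢ (Neg.neg '' B)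
  · have h' : (z.1, -z.2) ∈ A ×ˢ B := ⟨h.1, mem_neg_image.mp h.2⟩
    rw [ind, ind, Set.indicator_of_mem h', Set.indicator_of_mem h]
  · have h' : (z.1, -z.2) ∉ A ×ˢ B := by
      intro hc
      exact h ⟨hc.1, mem_neg_image.mpr (by simpa using hc.2)⟩
    rw [ind, ind, Set.indicator_of_notMem h', Set.indicator_of_notMem h]

lemma ind_neg (B : Set (Fin d → ℝ)) (y : Fin d → ℝ) :
    ind (Neg.neg '' B) y = ind B (-y) := by
  by_cases h : y ∈ Neg.neg '' B
  · rw [ind, ind, Set.indicator_of_mem h, Set.indicator_of_mem (mem_neg_image.mp h)]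
  · rw [ind, ind, Set.indicator_of_notMem h,
      Set.indicator_of_notMem (fun hc => h (mem_neg_image.mpr hc))]

lemma ind_preimage_R (T : Set ((Fin d → ℝ) × (Fin d → ℝ))) (z : (Fin d → ℝ) × (Fin d → ℝ)) :
    ind ((fun w : (Fin d → ℝ) × (Fin d → ℝ) => (w.1, -w.2)) '' T) z = ind T (z.1, -z.2) := by
  rw [R_image]
  by_cases h : (z.1, -z.2) ∈ T <;>
    simp [ind, Set.indicator_apply, Set.mem_preimage, h]

lemma ind_prod (A B : Set (Fin d → ℝ)) (x y : Fin d → ℝ) :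
    ind (A ×ˢ B) (x, y) = ind A x * ind B y := by
  by_cases hx : x ∈ A <;> by_cases hy : y ∈ B <;>
    simp [ind, Set.indicator_apply, Set.mem_prod, hx, hy]

lemma volume_prod_set (A B : Set (Fin d → ℝ)) :
    volume (A ×ˢ B) = volume A * volume B := by
  rw [Measure.volume_eq_prod]; apply Measure.prod_prod

lemma neg_image_meas {B : Set (Fin d → ℝ)} (h : MeasurableSet B) :
    MeasurableSet (Neg.neg '' B) := by
  have : Neg.neg '' B = Neg.neg ⁻¹' B := by
    ext y; rw [mem_neg_image]; simp
  rw [this]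
  exact measurable_neg h

lemma neg_image_vol (B : Set (Fin d → ℝ)) (h : MeasurableSet B) :
    volume (Neg.neg '' B) = volume B := by
  have h1 : Neg.neg '' B = Neg.neg ⁻¹' B := by
    ext y; rw [mem_neg_image]; simp
  rw [h1]
  exact (Measure.measurePreserving_neg (volume : Measure (Fin d → ℝ))).measure_preimage
    h.nullMeasurableSet

lemma neg_image_bounded {B : Set (Fin d → ℝ)} (h : Bornology.IsBounded B) :
    Bornology.IsBounded (Neg.neg '' B) := by
  obtain ⟨r, hr⟩ := h.subset_closedBall 0
  apply Bornology.IsBounded.subset (Metric.isBounded_closedBall (x := (0 : Fin d → ℝ)) (r := r))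
  rintro y ⟨w, hw, rfl⟩
  have := hr hw
  simp only [Metric.mem_closedBall, dist_zero_right] at *
  simpa using this

lemma integrable_ind {S : Set ((Fin d → ℝ) × (Fin d → ℝ))} (hm : MeasurableSet S)
    (hS : volume S < ⊤) : Integrable (ind S) := by
  rw [ind]
  rw [integrable_indicator_iff hm]
  exact (integrableOn_const_iff (C := (1:ℝ))).mpr (Or.inr hS)

/-- the transform -/
noncomputable def Phi (A B : Set (Fin d → ℝ)) (a b : ℝ)
    (h : ((Fin d → ℝ) × (Fin d → ℝ)) → ℝ) : ((Fin d → ℝ) × (Fin d → ℝ)) → ℝ :=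
  fun z => b / a * (a * ind (A ×ˢ B) (z.1, -z.2) - h (z.1, -z.2))

lemma conj_facts {a b : ℝ} (ha : 1 < a) (hab : 1 / a + 1 / b = 1) :
    1 < b ∧ b / a * (a - 1) = 1 := by
  have ha0 : 0 < a := by linarith
  have h1b : 1 / b = 1 - 1 / a := by linarith
  have hia : 1 / a < 1 := by rw [div_lt_one ha0]; exact ha
  have hia0 : 0 < 1 / a := by positivity
  have hb0 : 0 < b := one_div_pos.mp (by rw [h1b]; linarith)
  have hb1 : 1 < b := (div_lt_one hb0).mp (by rw [h1b]; linarith)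
  refine ⟨hb1, ?_⟩
  field_simp at hab
  field_simp
  linarith [hab]

lemma phi_mem (A B : Set (Fin d → ℝ)) (hAm : MeasurableSet A) (hBm : MeasurableSet B)
    (hA1 : volume A = 1) (hB1 : volume B = 1) (a b : ℝ) (ha : 1 < a)
    (hab : 1 / a + 1 / b = 1) (h : ((Fin d → ℝ) × (Fin d → ℝ)) → ℝ)
    (hm : memGamma d (ind A) (ind B) (fun z => a * ind (A ×ˢ B) z) h) :
    memGamma d (ind A) (ind (Neg.neg '' B)) (fun z => b * ind (A ×ˢ (Neg.neg '' B)) z)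
      (Phi A B a b h) := by
  obtain ⟨hb1, hkey⟩ := conj_facts ha hab
  have ha0 : (0:ℝ) < a := by linarith
  have hb0 : (0:ℝ) < b := by linarith
  obtain ⟨hInt, hpos, hle, hmarg1, hmarg2⟩ := hm
  have hABvol : volume (A ×ˢ B) < ⊤ := by
    rw [volume_prod_set, hA1, hB1]; norm_num
  have hindInt : Integrable (ind (A ×ˢ B)) := integrable_ind (hAm.prod hBm) hABvol
  have hPhiInt : Integrable (Phi A B a b h) := by
    refine Integrable.const_mul ?_ _
    exact ((integrable_comp_R hindInt).const_mul a).sub (integrable_comp_R hInt)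
  have hBint : Integrable (ind B) := by
    rw [ind, integrable_indicator_iff hBm]
    exact (integrableOn_const_iff (C := (1:ℝ))).mpr (Or.inr (by rw [hB1]; norm_num))
  have hAint : Integrable (ind A) := by
    rw [ind, integrable_indicator_iff hAm]
    exact (integrableOn_const_iff (C := (1:ℝ))).mpr (Or.inr (by rw [hA1]; norm_num))
  have hintB : ∫ y, ind B y = 1 := by
    rw [ind, integral_indicator hBm]
    simp [Measure.real, hB1]
  have hintA : ∫ x, ind A x = 1 := by
    rw [ind, integral_indicator hAm]
    simp [Measure.real, hA1]
  -- slice integrability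
  have h1 : Integrable (fun z : (Fin d → ℝ) × (Fin d → ℝ) => h (z.1, -z.2))
      (volume.prod volume) := by
    rw [← Measure.volume_eq_prod]; exact integrable_comp_R hInt
  refine ⟨hPhiInt, ?_, ?_, ?_, ?_⟩
  · filter_upwards [ae_R hle] with z hz
    exact mul_nonneg (by positivity) (by simpa using sub_nonneg.mpr hz)
  · filter_upwards [ae_R hpos] with z hz
    have : Phi A B a b h z ≤ b / a * (a * ind (A ×ˢ B) (z.1, -z.2)) := by
      unfold Phi
      have : a * ind (A ×ˢ B) (z.1, -z.2) - h (z.1, -z.2)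
          ≤ a * ind (A ×ˢ B) (z.1, -z.2) := by linarith
      exact mul_le_mul_of_nonneg_left this (by positivity)
    calc Phi A B a b h z ≤ b / a * (a * ind (A ×ˢ B) (z.1, -z.2)) := this
      _ = b * ind (A ×ˢ B) (z.1, -z.2) := by field_simp
      _ = b * ind (A ×ˢ (Neg.neg '' B)) z := by rw [ind_R]
  · -- first marginal
    have hsl := h1.prod_right_ae
    filter_upwards [hsl, hmarg1] with x hx hxm
    have hslice_ind : Integrable (fun y => a * ind (A ×ˢ B) (x, -y)) := by
      have : (fun y => ind (A ×ˢ B) (x, -y)) = fun y => ind A x * ind B (-y) := by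
        funext y; rw [ind_prod]
      refine Integrable.const_mul ?_ _
      rw [this]
      exact (integrable_comp_neg hBint).const_mul _
    have hcalc : ∀ y : Fin d → ℝ, Phi A B a b h (x, y)
        = b / a * (a * ind (A ×ˢ B) (x, -y) - h (x, -y)) := fun y => rfl
    simp only [hcalc]
    rw [integral_const_mul, integral_sub hslice_ind hx, integral_const_mul]
    have e1 : ∫ y, ind (A ×ˢ B) (x, -y) = ind A x := by
      have h2 : (fun y => ind (A ×ˢ B) (x, -y)) = fun y => ind A x * ind B (-y) := by
        funext y; rw [ind_prod]
      rw [h2, integral_const_mul,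
        show (∫ y : Fin d → ℝ, ind B (-y)) = ∫ y, ind B y from integral_neg_eq_self _ _,
        hintB, mul_one]
    have e2 : ∫ y, h (x, -y) = ind A x := by
      rw [show (∫ y : Fin d → ℝ, h (x, -y)) = ∫ y, h (x, y) from
        integral_neg_eq_self (fun y => h (x, y)) volume]
      exact hxm
    rw [e1, e2]
    linear_combination ind A x * hkey
  · -- second marginal
    have hsl := h1.prod_left_ae
    filter_upwards [hsl, ae_neg hmarg2] with y hy hym
    have hslice_ind : Integrable (fun x => a * ind (A ×ˢ B) (x, -y)) := by
      have : (fun x => ind (A ×ˢ B) (x, -y)) = fun x => ind A x * ind B (-y) := by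
        funext x; rw [ind_prod]
      refine Integrable.const_mul ?_ _
      rw [this]
      exact hAint.mul_const _
    have hcalc : ∀ x : Fin d → ℝ, Phi A B a b h (x, y)
        = b / a * (a * ind (A ×ˢ B) (x, -y) - h (x, -y)) := fun x => rfl
    simp only [hcalc]
    rw [integral_const_mul, integral_sub hslice_ind hy, integral_const_mul]
    have e1 : ∫ x, ind (A ×ˢ B) (x, -y) = ind B (-y) := by
      have : (fun x => ind (A ×ˢ B) (x, -y)) = fun x => ind A x * ind B (-y) := by
        funext x; rw [ind_prod]
      rw [this, integral_mul_const, hintA, one_mul]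
    rw [e1, hym, ind_neg]
    linear_combination ind B (-y) * hkey

noncomputable def cst (d : ℕ) : ((Fin d → ℝ) × (Fin d → ℝ)) → ℝ :=
  fun z => -(∑ i : Fin d, z.1 i * z.2 i)

lemma cst_R (z : (Fin d → ℝ) × (Fin d → ℝ)) : cst d (z.1, -z.2) = - cst d z := by
  simp [cst, mul_neg, Finset.sum_neg_distrib]

lemma cst_continuous : Continuous (cst d) := by
  unfold cst; fun_prop

lemma cst_bound {A B : Set (Fin d → ℝ)} (hAb : Bornology.IsBounded A)
    (hBb : Bornology.IsBounded B) :
    ∃ M : ℝ, 0 ≤ M ∧ ∀ z ∈ A ×ˢ B, |cst d z| ≤ M := by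
  obtain ⟨rA, hrA⟩ := hAb.exists_norm_le
  obtain ⟨rB, hrB⟩ := hBb.exists_norm_le
  refine ⟨d * (max rA 0 * max rB 0), by positivity, ?_⟩
  rintro ⟨x, y⟩ ⟨hx, hy⟩
  have hxn := hrA _ hx
  have hyn := hrB _ hy
  have : |cst d (x, y)| ≤ ∑ i : Fin d, |x i * y i| := by
    rw [cst, abs_neg]
    exact Finset.abs_sum_le_sum_abs _ _
  refine this.trans ?_
  have hb : ∀ i : Fin d, |x i * y i| ≤ max rA 0 * max rB 0 := by
    intro i
    rw [abs_mul]
    have h1 : |x i| ≤ max rA 0 := le_trans (by simpa using norm_le_pi_norm x i)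
      (le_trans hxn (le_max_left _ _))
    have h2 : |y i| ≤ max rB 0 := le_trans (by simpa using norm_le_pi_norm y i)
      (le_trans hyn (le_max_left _ _))
    exact mul_le_mul h1 h2 (abs_nonneg _) (le_max_right _ _)
  calc (∑ i : Fin d, |x i * y i|) ≤ ∑ _i : Fin d, (max rA 0 * max rB 0) :=
        Finset.sum_le_sum fun i _ => hb i
    _ = d * (max rA 0 * max rB 0) := by simp [mul_comm]

lemma cost_integrable {A B : Set (Fin d → ℝ)} (hAm : MeasurableSet A) (hBm : MeasurableSet B)
    (hA1 : volume A = 1) (hB1 : volume B = 1)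
    (hAb : Bornology.IsBounded A) (hBb : Bornology.IsBounded B) {a : ℝ} (ha0 : 0 ≤ a)
    {h : ((Fin d → ℝ) × (Fin d → ℝ)) → ℝ} (hInt : Integrable h)
    (hpos : ∀ᵐ z, 0 ≤ h z) (hle : ∀ᵐ z, h z ≤ a * ind (A ×ˢ B) z) :
    Integrable (fun z => cst d z * h z) := by
  obtain ⟨M, hM0, hM⟩ := cst_bound hAb hBb
  have hABvol : volume (A ×ˢ B) < ⊤ := by
    rw [volume_prod_set, hA1, hB1]; norm_num
  have hindInt : Integrable (ind (A ×ˢ B)) := integrable_ind (hAm.prod hBm) hABvol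
  refine Integrable.mono' (hindInt.const_mul (M * a)) ?_ ?_
  · exact (cst_continuous.aestronglyMeasurable).mul hInt.aestronglyMeasurable
  · filter_upwards [hpos, hle] with z h0 h1
    rw [Real.norm_eq_abs, abs_mul, abs_of_nonneg h0]
    by_cases hz : z ∈ A ×ˢ B
    · have : h z ≤ a := by
        have := h1
        rwa [ind, Set.indicator_of_mem hz, mul_one] at this
      calc |cst d z| * h z ≤ M * a :=
            mul_le_mul (hM z hz) this h0 hM0
        _ = M * a * ind (A ×ˢ B) z := by rw [ind, Set.indicator_of_mem hz, mul_one]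
    · have h2 : h z ≤ 0 := by
        have := h1
        rwa [ind, Set.indicator_of_notMem hz, mul_zero] at this
      have h3 : h z = 0 := le_antisymm h2 h0
      rw [h3, mul_zero, ind, Set.indicator_of_notMem hz, mul_zero]

/-- cost transformation formula -/
lemma phi_cost {A B : Set (Fin d → ℝ)} (hAm : MeasurableSet A) (hBm : MeasurableSet B)
    (hA1 : volume A = 1) (hB1 : volume B = 1)
    (hAb : Bornology.IsBounded A) (hBb : Bornology.IsBounded B)
    {a b : ℝ} (ha : 1 < a) (hab : 1 / a + 1 / b = 1)
    {h : ((Fin d → ℝ) × (Fin d → ℝ)) → ℝ}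
    (hm : memGamma d (ind A) (ind B) (fun z => a * ind (A ×ˢ B) z) h) :
    ∫ z, cst d z * Phi A B a b h z
      = b / a * (∫ z, cst d z * h z) - b * ∫ z, cst d z * ind (A ×ˢ B) z := by
  obtain ⟨hb1, hkey⟩ := conj_facts ha hab
  have ha0 : (0:ℝ) < a := by linarith
  have hb0 : (0:ℝ) < b := by linarith
  obtain ⟨hInt, hpos, hle, hmarg1, hmarg2⟩ := hm
  have hABvol : volume (A ×ˢ B) < ⊤ := by
    rw [volume_prod_set, hA1, hB1]; norm_num
  have hindInt : Integrable (ind (A ×ˢ B)) := integrable_ind (hAm.prod hBm) hABvol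
  have hch : Integrable (fun z => cst d z * h z) :=
    cost_integrable hAm hBm hA1 hB1 hAb hBb ha0.le hInt hpos hle
  have hcind : Integrable (fun z => cst d z * ind (A ×ˢ B) z) := by
    refine cost_integrable hAm hBm hA1 hB1 hAb hBb (le_of_lt ha0) hindInt ?_ ?_
    · filter_upwards with z
      exact Set.indicator_nonneg (fun _ _ => zero_le_one) z
    · filter_upwards with z
      have h0 : (0:ℝ) ≤ ind (A ×ˢ B) z :=
        Set.indicator_nonneg (fun _ _ => zero_le_one) z
      nlinarith
  calc (∫ z, cst d z * Phi A B a b h z)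
      = ∫ z : (Fin d → ℝ) × (Fin d → ℝ), (- cst d (z.1, -z.2))
          * (b / a * (a * ind (A ×ˢ B) (z.1, -z.2) - h (z.1, -z.2))) := by
        congr 1; funext z; rw [cst_R, neg_neg]; rfl
    _ = ∫ w : (Fin d → ℝ) × (Fin d → ℝ), (- cst d w) * (b / a * (a * ind (A ×ˢ B) w - h w)) :=
        integral_comp_R (fun w => (- cst d w) * (b / a * (a * ind (A ×ˢ B) w - h w)))
    _ = ∫ w, (b / a * (cst d w * h w) - b * (cst d w * ind (A ×ˢ B) w)) := by
        congr 1; funext w; field_simp; ring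
    _ = b / a * (∫ z, cst d z * h z) - b * ∫ z, cst d z * ind (A ×ˢ B) z := by
        rw [integral_sub (hch.const_mul _) (hcind.const_mul _), integral_const_mul,
          integral_const_mul]

lemma ind_diff {α : Type*} {S W : Set α} (hW : W ⊆ S) (z : α) :
    ind (S \ W) z = ind S z - ind W z := by
  by_cases hz : z ∈ W
  · simp [ind, Set.indicator_apply, hz, hW hz]
  · by_cases hz2 : z ∈ S <;> simp [ind, Set.indicator_apply, hz, hz2]

/-- Phi of the scaled indicator -/
lemma phi_indicator {A B : Set (Fin d → ℝ)} {a b : ℝ} (ha0 : a ≠ 0)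
    {W : Set ((Fin d → ℝ) × (Fin d → ℝ))} (hW : W ⊆ A ×ˢ B) :
    Phi A B a b (fun z => a * ind W z)
      = fun z => b * ind ((fun w : (Fin d → ℝ) × (Fin d → ℝ) => (w.1, -w.2))
          '' ((A ×ˢ B) \ W)) z := by
  funext z
  have e : Phi A B a b (fun z => a * ind W z) z
      = b / a * (a * ind (A ×ˢ B) (z.1, -z.2) - a * ind W (z.1, -z.2)) := rfl
  rw [e, ind_preimage_R, ind_diff hW]
  field_simp

/-- the two transforms are inverse to each other -/
lemma phi_phi {A B : Set (Fin d → ℝ)} {a b : ℝ} (ha0 : a ≠ 0) (hb0 : b ≠ 0)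
    (k : ((Fin d → ℝ) × (Fin d → ℝ)) → ℝ) :
    Phi A B a b (Phi A (Neg.neg '' B) b a k) = k := by
  funext z
  unfold Phi
  simp only [neg_neg]
  rw [show ind (A ×ˢ B) (z.1, -z.2) = ind (A ×ˢ (Neg.neg '' B)) z from ind_R A B z]
  field_simp
  ring

lemma main_dir (A B : Set (Fin d → ℝ))
    (hAm : MeasurableSet A) (hBm : MeasurableSet B)
    (hAb : Bornology.IsBounded A) (hBb : Bornology.IsBounded B)
    (hA1 : volume A = 1) (hB1 : volume B = 1)
    (a b : ℝ) (ha : 1 < a) (hab : 1 / a + 1 / b = 1)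
    (W : Set ((Fin d → ℝ) × (Fin d → ℝ))) (hWm : MeasurableSet W) (hWsub : W ⊆ A ×ˢ B)
    (H : memGamma d (ind A) (ind B) (fun z => a * ind (A ×ˢ B) z) (fun z => a * ind W z) ∧
      ∀ k, memGamma d (ind A) (ind B) (fun z => a * ind (A ×ˢ B) z) k →
        (∫ z, cst d z * (a * ind W z)) ≤ ∫ z, cst d z * k z) :
    memGamma d (ind A) (ind (Neg.neg '' B)) (fun z => b * ind (A ×ˢ (Neg.neg '' B)) z)
      (fun z => b * ind ((fun w : (Fin d → ℝ) × (Fin d → ℝ) => (w.1, -w.2))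
        '' ((A ×ˢ B) \ W)) z) ∧
    ∀ k, memGamma d (ind A) (ind (Neg.neg '' B))
        (fun z => b * ind (A ×ˢ (Neg.neg '' B)) z) k →
      (∫ z, cst d z * (b * ind ((fun w : (Fin d → ℝ) × (Fin d → ℝ) => (w.1, -w.2))
        '' ((A ×ˢ B) \ W)) z)) ≤ ∫ z, cst d z * k z := by
  obtain ⟨hfeas, hmin⟩ := H
  obtain ⟨hb1, hkey⟩ := conj_facts ha hab
  have ha0 : (0:ℝ) < a := by linarith
  have hb0 : (0:ℝ) < b := by linarith
  have hPhiW := phi_indicator (A := A) (B := B) (a := a) (b := b) ha0.ne' hWsub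
  constructor
  · rw [← hPhiW]
    exact phi_mem A B hAm hBm hA1 hB1 a b ha hab _ hfeas
  · intro k hk
    have hba : 1 / b + 1 / a = 1 := by linarith
    have hB'1 : volume (Neg.neg '' B) = 1 := by rw [neg_image_vol B hBm]; exact hB1
    have h₀mem := phi_mem A (Neg.neg '' B) hAm (neg_image_meas hBm) hA1 hB'1 b a hb1 hba k hk
    rw [negneg] at h₀mem
    have hmin' := hmin _ h₀mem
    have hcost1 : (∫ z, cst d z * (b * ind ((fun w : (Fin d → ℝ) × (Fin d → ℝ) =>
        (w.1, -w.2)) '' ((A ×ˢ B) \ W)) z))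
        = b / a * (∫ z, cst d z * (a * ind W z)) - b * ∫ z, cst d z * ind (A ×ˢ B) z := by
      rw [show (∫ z, cst d z * (b * ind ((fun w : (Fin d → ℝ) × (Fin d → ℝ) =>
          (w.1, -w.2)) '' ((A ×ˢ B) \ W)) z))
          = ∫ z, cst d z * Phi A B a b (fun z => a * ind W z) z from by
            congr 1; funext z; rw [hPhiW]]
      exact phi_cost hAm hBm hA1 hB1 hAb hBb ha hab hfeas
    have hcost2 : (∫ z, cst d z * k z)
        = b / a * (∫ z, cst d z * Phi A (Neg.neg '' B) b a k z)
          - b * ∫ z, cst d z * ind (A ×ˢ B) z := by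
      rw [show (∫ z, cst d z * k z)
          = ∫ z, cst d z * Phi A B a b (Phi A (Neg.neg '' B) b a k) z from by
            congr 1; funext z; rw [phi_phi ha0.ne' hb0.ne' k]]
      exact phi_cost hAm hBm hA1 hB1 hAb hBb ha hab h₀mem
    rw [hcost1, hcost2]
    have : (∫ z, cst d z * (a * ind W z)) ≤ ∫ z, cst d z * Phi A (Neg.neg '' B) b a k z :=
      hmin'
    have hmul := mul_le_mul_of_nonneg_left this (by positivity : (0:ℝ) ≤ b / a)
    linarith

lemma R_diff_W {A B : Set (Fin d → ℝ)} {W : Set ((Fin d → ℝ) × (Fin d → ℝ))}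
    (hWsub : W ⊆ A ×ˢ B) :
    (fun w : (Fin d → ℝ) × (Fin d → ℝ) => (w.1, -w.2)) ''
      ((A ×ˢ (Neg.neg '' B)) \
        ((fun w : (Fin d → ℝ) × (Fin d → ℝ) => (w.1, -w.2)) '' ((A ×ˢ B) \ W))) = W := by
  rw [R_image, R_image]
  ext z
  simp only [Set.mem_preimage, Set.mem_diff, Set.mem_prod, neg_neg]
  constructor
  · rintro ⟨⟨h1, h2⟩, h3⟩
    have h2' : z.2 ∈ B := by
      have := mem_neg_image.mp h2
      simpa using this
    by_contra hzW
    exact h3 ⟨⟨h1, h2'⟩, hzW⟩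
  · intro hz
    have hzAB := hWsub hz
    exact ⟨⟨hzAB.1, mem_neg_image.mpr (by simpa using hzAB.2)⟩, fun hc => hc.2 hz⟩

end Stmt19

open Stmt19

/-- Symmetry of capacity constrained transport for `c(x,y) = −x·y`: `p·1_W` minimizes
the cost over `Γ(1_Ω,1_Λ)^{p·1_{Ω×Λ}}` iff `q·1_{R(W̃)}` minimizes the cost over
`Γ(1_Ω,1_{−Λ})^{q·1_{Ω×(−Λ)}}`, where `W̃ = (Ω×Λ)\W`, `R(x,y) = (x,−y)` and
`1/p + 1/q = 1`. -/
theorem stmt19 (d : ℕ) (Ω Λ : Set (Fin d → ℝ))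
    (hΩm : MeasurableSet Ω) (hΛm : MeasurableSet Λ)
    (hΩb : Bornology.IsBounded Ω) (hΛb : Bornology.IsBounded Λ)
    (hΩ1 : volume Ω = 1) (hΛ1 : volume Λ = 1)
    (p q : ℝ) (hp : 1 < p) (hpq : 1 / p + 1 / q = 1)
    (W : Set ((Fin d → ℝ) × (Fin d → ℝ))) (hWm : MeasurableSet W)
    (hWsub : W ⊆ Ω ×ˢ Λ) :
    ((memGamma d (Set.indicator Ω fun _ => 1) (Set.indicator Λ fun _ => 1)
        (fun z => p * Set.indicator (Ω ×ˢ Λ) (fun _ => 1) z)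
        (fun z => p * Set.indicator W (fun _ => 1) z)) ∧
      (∀ k, memGamma d (Set.indicator Ω fun _ => 1) (Set.indicator Λ fun _ => 1)
          (fun z => p * Set.indicator (Ω ×ˢ Λ) (fun _ => 1) z) k →
        (∫ z : (Fin d → ℝ) × (Fin d → ℝ),
            (-(∑ i : Fin d, z.1 i * z.2 i)) * (p * Set.indicator W (fun _ => 1) z))
          ≤ ∫ z : (Fin d → ℝ) × (Fin d → ℝ), (-(∑ i : Fin d, z.1 i * z.2 i)) * k z))
    ↔
    ((memGamma d (Set.indicator Ω fun _ => 1)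
        (Set.indicator (Neg.neg '' Λ) fun _ => 1)
        (fun z => q * Set.indicator (Ω ×ˢ (Neg.neg '' Λ)) (fun _ => 1) z)
        (fun z => q * Set.indicator
          ((fun w : (Fin d → ℝ) × (Fin d → ℝ) => (w.1, -w.2)) '' ((Ω ×ˢ Λ) \ W))
          (fun _ => 1) z)) ∧
      (∀ k, memGamma d (Set.indicator Ω fun _ => 1)
          (Set.indicator (Neg.neg '' Λ) fun _ => 1)
          (fun z => q * Set.indicator (Ω ×ˢ (Neg.neg '' Λ)) (fun _ => 1) z) k →
        (∫ z : (Fin d → ℝ) × (Fin d → ℝ),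
            (-(∑ i : Fin d, z.1 i * z.2 i)) *
              (q * Set.indicator
                ((fun w : (Fin d → ℝ) × (Fin d → ℝ) => (w.1, -w.2)) '' ((Ω ×ˢ Λ) \ W))
                (fun _ => 1) z))
          ≤ ∫ z : (Fin d → ℝ) × (Fin d → ℝ), (-(∑ i : Fin d, z.1 i * z.2 i)) * k z)) := by
  have hq : 1 < q := (conj_facts hp hpq).1
  have hqp : 1 / q + 1 / p = 1 := by linarith
  constructor
  · intro H
    exact main_dir Ω Λ hΩm hΛm hΩb hΛb hΩ1 hΛ1 p q hp hpq W hWm hWsub H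
  · intro H
    have hW'm : MeasurableSet ((fun w : (Fin d → ℝ) × (Fin d → ℝ) => (w.1, -w.2))
        '' ((Ω ×ˢ Λ) \ W)) := by
      rw [R_image]
      exact MeasurableSet.preimage ((hΩm.prod hΛm).diff hWm) (Req d).measurable
    have hW'sub : ((fun w : (Fin d → ℝ) × (Fin d → ℝ) => (w.1, -w.2))
        '' ((Ω ×ˢ Λ) \ W)) ⊆ Ω ×ˢ (Neg.neg '' Λ) := by
      rw [R_image]
      rintro z ⟨⟨h1, h2⟩, _⟩
      exact ⟨h1, mem_neg_image.mpr h2⟩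
    have := main_dir Ω (Neg.neg '' Λ) hΩm (neg_image_meas hΛm) hΩb (neg_image_bounded hΛb)
      hΩ1 (by rw [neg_image_vol _ hΛm]; exact hΛ1) q p hq hqp
      ((fun w : (Fin d → ℝ) × (Fin d → ℝ) => (w.1, -w.2)) '' ((Ω ×ˢ Λ) \ W))
      hW'm hW'sub H
    rw [negneg, R_diff_W hWsub] at this
    exact this
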